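/- Let G(X,Y) be a bipartite graph with |X| = |Y| = n having at least one perfect matching, P its matrix of matching marginals, and Q a nonnegative matrix whose support contains the support of P, with row entries Q_{ij}. For a uniformly random perfect matching M and an independent uniformly random permutation π of [n], E[log p_{π,Q}(M)] ≥ Σ_e P_e log Q_e − Σ_{i,k} P_{ik} E_π[log Σ_{j ≥_π k} Q_{ij}], where p_{π,Q}(M) is the probability that the sequential importance sampler with order π and weight matrix Q outputs M, and j ≥_π k means π⁻¹(j) ≥ π⁻¹(k). -/

import Mathlib

open Finset
open Classical

/-- The probability that the sequential importance sampler with vertex order `π` and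
weight matrix `Q` outputs the perfect matching `M` of the bipartite graph with adjacency
relation `A`: at step `i` it matches vertex `π i`, choosing among the still-extendable
partners `j` with probability proportional to `Q (π i) j`. -/
noncomputable def sisProb (n : ℕ) (A : Fin n → Fin n → Prop)
    (Q : Fin n → Fin n → ℝ) (π M : Equiv.Perm (Fin n)) : ℝ :=
  ∏ i : Fin n,
    (Q (π i) (M (π i)) /
      ∑ j ∈ univ.filter (fun j => ∃ M' : Equiv.Perm (Fin n),
          (∀ l, A l (M' l)) ∧ M' (π i) = j ∧ ∀ l, l < i → M' (π l) = M (π l)),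
        Q (π i) j)

/-- `matchingMarginal n A i k` : the probability that the edge `(i, k)` belongs to a
uniformly random perfect matching. -/
noncomputable def matchingMarginal (n : ℕ) (A : Fin n → Fin n → Prop)
    (i k : Fin n) : ℝ :=
  (Nat.card {M : Equiv.Perm (Fin n) // (∀ l, A l (M l)) ∧ M i = k} : ℝ) /
    (Nat.card {M : Equiv.Perm (Fin n) // ∀ l, A l (M l)} : ℝ)

/-- Auxiliary: pointwise lower bound on the log of the sampler probability. -/
private lemma sis_pointwise (n : ℕ) (A : Fin n → Fin n → Prop)
    (Q : Fin n → Fin n → ℝ) (hQ0 : ∀ i j, 0 ≤ Q i j)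
    (M π : Equiv.Perm (Fin n)) (hM : ∀ l, A l (M l))
    (hq : ∀ x, 0 < Q x (M x)) :
    (∑ x, Real.log (Q x (M x))) -
      ∑ i, Real.log (∑ j ∈ univ.filter (fun j => i ≤ π.symm (M.symm j)), Q (π i) j)
      ≤ Real.log (sisProb n A Q π M) := by
  classical
  set Ext : Fin n → Finset (Fin n) := fun i =>
    univ.filter (fun j => ∃ M' : Equiv.Perm (Fin n),
      (∀ l, A l (M' l)) ∧ M' (π i) = j ∧ ∀ l, l < i → M' (π l) = M (π l)) with hExt
  set D : Fin n → ℝ := fun i => ∑ j ∈ Ext i, Q (π i) j with hD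
  set T : Fin n → ℝ := fun i =>
    ∑ j ∈ univ.filter (fun j => i ≤ π.symm (M.symm j)), Q (π i) j with hT
  have hmem : ∀ i, M (π i) ∈ Ext i := by
    intro i
    simp only [hExt, mem_filter, mem_univ, true_and]
    exact ⟨M, hM, rfl, fun l _ => rfl⟩
  have hqD : ∀ i, Q (π i) (M (π i)) ≤ D i := fun i =>
    Finset.single_le_sum (fun j _ => hQ0 _ j) (hmem i)
  have hDpos : ∀ i, 0 < D i := fun i => lt_of_lt_of_le (hq _) (hqD i)
  have hsub : ∀ i, Ext i ⊆ univ.filter (fun j => i ≤ π.symm (M.symm j)) := by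
    intro i j hj
    simp only [hExt, mem_filter, mem_univ, true_and] at hj ⊢
    obtain ⟨M', hM', hMi, hagree⟩ := hj
    by_contra h
    push_neg at h
    have hl : M (π (π.symm (M.symm j))) = j := by simp
    have h2 : M' (π (π.symm (M.symm j))) = M' (π i) := by
      rw [hagree _ h, hl, hMi]
    have h3 : π.symm (M.symm j) = i := π.injective (M'.injective h2)
    rw [h3] at h
    exact lt_irrefl i h
  have hDT : ∀ i, D i ≤ T i := fun i =>
    Finset.sum_le_sum_of_subset_of_nonneg (hsub i) (fun j _ _ => hQ0 _ j)
  have hTpos : ∀ i, 0 < T i := fun i => lt_of_lt_of_le (hDpos i) (hDT i)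
  have hlog : Real.log (sisProb n A Q π M) =
      ∑ i, (Real.log (Q (π i) (M (π i))) - Real.log (D i)) := by
    rw [sisProb, Real.log_prod (fun i _ => ne_of_gt (div_pos (hq _) (hDpos i)))]
    exact Finset.sum_congr rfl fun i _ =>
      Real.log_div (ne_of_gt (hq _)) (ne_of_gt (hDpos i))
  rw [hlog, Finset.sum_sub_distrib]
  have h1 : ∑ i, Real.log (Q (π i) (M (π i))) = ∑ x, Real.log (Q x (M x)) :=
    Equiv.sum_comp π (fun x => Real.log (Q x (M x)))
  rw [h1]
  refine sub_le_sub_left (Finset.sum_le_sum fun i _ => ?_) _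
  exact Real.log_le_log (hDpos i) (hDT i)

/-- Auxiliary: fiberwise decomposition of a sum over perfect matchings. -/
private lemma fiber_sum (n : ℕ) (A : Fin n → Fin n → Prop) (x : Fin n) (g : Fin n → ℝ) :
    ∑ M : {M : Equiv.Perm (Fin n) // ∀ l, A l (M l)}, g (M.1 x)
      = ∑ k, (Nat.card {M : Equiv.Perm (Fin n) // (∀ l, A l (M l)) ∧ M x = k} : ℝ) * g k := by
  classical
  rw [← Finset.sum_fiberwise univ (fun M : {M : Equiv.Perm (Fin n) // ∀ l, A l (M l)} => M.1 x)
    (fun M => g (M.1 x))]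
  refine Finset.sum_congr rfl fun k _ => ?_
  have h1 : ∀ M ∈ univ.filter
      (fun M : {M : Equiv.Perm (Fin n) // ∀ l, A l (M l)} => M.1 x = k),
      g (M.1 x) = g k := by
    intro M hM; rw [(mem_filter.mp hM).2]
  rw [Finset.sum_congr rfl h1, Finset.sum_const, nsmul_eq_mul]
  congr 1
  rw [← Fintype.card_subtype]
  rw [Nat.card_congr (Equiv.subtypeSubtypeEquivSubtypeInter
    (fun M : Equiv.Perm (Fin n) => ∀ l, A l (M l)) (fun M => M x = k)).symm]
  rw [Nat.card_eq_fintype_card]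

set_option maxHeartbeats 1000000 in
/-- Key inequality for sequential importance sampling: for a uniformly random perfect
matching `M` and an independent uniformly random order `π`,
`E[log p_{π,Q}(M)] ≥ Σ_e P_e log Q_e − Σ_{i,k} P_{ik} E_π[log Σ_{j ≥_π k} Q_{ij}]`,
where `j ≥_π k` means `π⁻¹ j ≥ π⁻¹ k`. -/
theorem sis_log_prob_lower_bound
    (n : ℕ) (A : Fin n → Fin n → Prop)
    (hPM : Nonempty {M : Equiv.Perm (Fin n) // ∀ l, A l (M l)})
    (Q : Fin n → Fin n → ℝ) (hQ0 : ∀ i j, 0 ≤ Q i j)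
    (hsupp : ∀ i k, matchingMarginal n A i k ≠ 0 → Q i k ≠ 0) :
    (∑ i, ∑ k, matchingMarginal n A i k * Real.log (Q i k)) -
        (∑ i, ∑ k, matchingMarginal n A i k *
          ((1 / (n.factorial : ℝ)) * ∑ π : Equiv.Perm (Fin n),
            Real.log (∑ j ∈ univ.filter (fun j => π.symm k ≤ π.symm j), Q i j)))
      ≤ (1 / ((Nat.card {M : Equiv.Perm (Fin n) // ∀ l, A l (M l)} *
            n.factorial : ℕ) : ℝ)) *
          ∑ M : {M : Equiv.Perm (Fin n) // ∀ l, A l (M l)},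
            ∑ π : Equiv.Perm (Fin n), Real.log (sisProb n A Q π M.1) := by
  classical
  set N : ℕ := Nat.card {M : Equiv.Perm (Fin n) // ∀ l, A l (M l)} with hNdef
  have hNpos : 0 < N := Nat.card_pos
  have hN0 : (N : ℝ) ≠ 0 := Nat.cast_ne_zero.mpr hNpos.ne'
  have hf0 : ((n.factorial : ℕ) : ℝ) ≠ 0 := Nat.cast_ne_zero.mpr (Nat.factorial_ne_zero n)
  set c : Fin n → Fin n → ℕ := fun x k =>
    Nat.card {M : Equiv.Perm (Fin n) // (∀ l, A l (M l)) ∧ M x = k} with hcdef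
  set W : Fin n → Fin n → Equiv.Perm (Fin n) → ℝ := fun x k σ =>
    Real.log (∑ j ∈ univ.filter (fun j => σ.symm k ≤ σ.symm j), Q x j) with hWdef
  have hmarg : ∀ x k, matchingMarginal n A x k = (c x k : ℝ) / N := fun x k => rfl
  -- positivity of Q along any perfect matching
  have hqpos : ∀ (M : Equiv.Perm (Fin n)), (∀ l, A l (M l)) → ∀ x, 0 < Q x (M x) := by
    intro M hM x
    have hne : Nonempty {M' : Equiv.Perm (Fin n) // (∀ l, A l (M' l)) ∧ M' x = M x} :=
      ⟨⟨M, hM, rfl⟩⟩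
    have hc : c x (M x) ≠ 0 := Nat.card_pos.ne'
    have hP : matchingMarginal n A x (M x) ≠ 0 := by
      rw [hmarg]
      exact div_ne_zero (Nat.cast_ne_zero.mpr hc) hN0
    exact lt_of_le_of_ne (hQ0 x (M x)) (Ne.symm (hsupp _ _ hP))
  -- pointwise lower bound, with the superset sum rewritten in the `W` form
  have key : ∀ (M : {M : Equiv.Perm (Fin n) // ∀ l, A l (M l)}) (π : Equiv.Perm (Fin n)),
      (∑ x, Real.log (Q x (M.1 x))) - ∑ x, W x (M.1 x) (π.trans M.1)
        ≤ Real.log (sisProb n A Q π M.1) := by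
    intro M π
    refine le_trans (le_of_eq ?_) (sis_pointwise n A Q hQ0 M.1 π M.2 (hqpos M.1 M.2))
    congr 1
    rw [← Equiv.sum_comp π (fun x => W x (M.1 x) (π.trans M.1))]
    refine Finset.sum_congr rfl fun i _ => ?_
    simp only [hWdef]
    congr 2
    ext j
    simp [Equiv.symm_trans_apply]
  -- sum the pointwise bound
  have sum_bound :
      ∑ M : {M : Equiv.Perm (Fin n) // ∀ l, A l (M l)}, ∑ π : Equiv.Perm (Fin n),
        ((∑ x, Real.log (Q x (M.1 x))) - ∑ x, W x (M.1 x) (π.trans M.1))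
      ≤ ∑ M : {M : Equiv.Perm (Fin n) // ∀ l, A l (M l)}, ∑ π : Equiv.Perm (Fin n),
          Real.log (sisProb n A Q π M.1) :=
    Finset.sum_le_sum fun M _ => Finset.sum_le_sum fun π _ => key M π
  -- rewrite the left-hand side of sum_bound
  set A1 : ℝ := ∑ x, ∑ k, (c x k : ℝ) * Real.log (Q x k) with hA1
  set A2 : ℝ := ∑ x, ∑ k, (c x k : ℝ) * (∑ σ : Equiv.Perm (Fin n), W x k σ) with hA2
  have hperm_card : (Finset.univ : Finset (Equiv.Perm (Fin n))).card = n.factorial := by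
    rw [Finset.card_univ, Fintype.card_perm, Fintype.card_fin]
  have hsum_eq :
      ∑ M : {M : Equiv.Perm (Fin n) // ∀ l, A l (M l)}, ∑ π : Equiv.Perm (Fin n),
        ((∑ x, Real.log (Q x (M.1 x))) - ∑ x, W x (M.1 x) (π.trans M.1))
      = (n.factorial : ℝ) * A1 - A2 := by
    have hM1 : ∀ M : {M : Equiv.Perm (Fin n) // ∀ l, A l (M l)},
        ∑ π : Equiv.Perm (Fin n),
          ((∑ x, Real.log (Q x (M.1 x))) - ∑ x, W x (M.1 x) (π.trans M.1))
        = (n.factorial : ℝ) * (∑ x, Real.log (Q x (M.1 x)))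
            - ∑ σ : Equiv.Perm (Fin n), ∑ x, W x (M.1 x) σ := by
      intro M
      rw [Finset.sum_sub_distrib, Finset.sum_const, hperm_card, nsmul_eq_mul]
      congr 1
      have := Equiv.sum_comp (Equiv.mulLeft M.1)
        (fun σ : Equiv.Perm (Fin n) => ∑ x, W x (M.1 x) σ)
      simpa [Equiv.Perm.mul_def] using this
    rw [Finset.sum_congr rfl (fun M _ => hM1 M), Finset.sum_sub_distrib]
    congr 1
    · rw [← Finset.mul_sum]
      congr 1
      rw [Finset.sum_comm, hA1]
      exact Finset.sum_congr rfl fun x _ => fiber_sum n A x (fun k => Real.log (Q x k))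
    · rw [hA2]
      have : ∀ M : {M : Equiv.Perm (Fin n) // ∀ l, A l (M l)},
          ∑ σ : Equiv.Perm (Fin n), ∑ x, W x (M.1 x) σ
          = ∑ x, ∑ σ : Equiv.Perm (Fin n), W x (M.1 x) σ := fun M => Finset.sum_comm
      rw [Finset.sum_congr rfl (fun M _ => this M), Finset.sum_comm]
      exact Finset.sum_congr rfl fun x _ =>
        fiber_sum n A x (fun k => ∑ σ : Equiv.Perm (Fin n), W x k σ)
  -- rewrite the theorem's left-hand side
  have hLHS :
      (∑ i, ∑ k, matchingMarginal n A i k * Real.log (Q i k)) -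
        (∑ i, ∑ k, matchingMarginal n A i k *
          ((1 / (n.factorial : ℝ)) * ∑ π : Equiv.Perm (Fin n),
            Real.log (∑ j ∈ univ.filter (fun j => π.symm k ≤ π.symm j), Q i j)))
      = (1 / ((N * n.factorial : ℕ) : ℝ)) * ((n.factorial : ℝ) * A1 - A2) := by
    have e1 : ∑ i, ∑ k, matchingMarginal n A i k * Real.log (Q i k) = A1 / N := by
      rw [hA1, Finset.sum_div]
      refine Finset.sum_congr rfl fun x _ => ?_
      rw [Finset.sum_div]
      refine Finset.sum_congr rfl fun k _ => ?_
      rw [hmarg]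
      ring
    have e2 : ∑ i, ∑ k, matchingMarginal n A i k *
          ((1 / (n.factorial : ℝ)) * ∑ π : Equiv.Perm (Fin n),
            Real.log (∑ j ∈ univ.filter (fun j => π.symm k ≤ π.symm j), Q i j))
        = A2 / ((N : ℝ) * n.factorial) := by
      rw [hA2, Finset.sum_div]
      refine Finset.sum_congr rfl fun x _ => ?_
      rw [Finset.sum_div]
      refine Finset.sum_congr rfl fun k _ => ?_
      rw [hmarg]
      simp only [hWdef]
      ring
    rw [e1, e2]
    push_cast
    rw [div_sub_div _ _ hN0 (by positivity : (N:ℝ) * n.factorial ≠ 0)]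
    rw [one_div, ← div_eq_inv_mul]
    rw [div_eq_div_iff (by positivity) (by positivity)]
    ring
  rw [hLHS]
  have hcoef : (0:ℝ) ≤ 1 / ((N * n.factorial : ℕ) : ℝ) := by positivity
  calc (1 / ((N * n.factorial : ℕ) : ℝ)) * ((n.factorial : ℝ) * A1 - A2)
      = (1 / ((N * n.factorial : ℕ) : ℝ)) *
          ∑ M : {M : Equiv.Perm (Fin n) // ∀ l, A l (M l)}, ∑ π : Equiv.Perm (Fin n),
            ((∑ x, Real.log (Q x (M.1 x))) - ∑ x, W x (M.1 x) (π.trans M.1)) := by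
        rw [hsum_eq]
    _ ≤ _ := mul_le_mul_of_nonneg_left sum_bound hcoef
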